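/- arXiv:2509.09256 — 3 statements merged into one kernel-verified Lean document; each statement's English description precedes it below -/
import Mathlib

section
/- (Partial nonlinear right eigenvalue assignment) Let f : ℝ^n → ℝ^n, g : ℝ^n → ℝ^{n×m}, k : ℝ^n → ℝ^m, l : ℝ^ν → ℝ^m, s : ℝ^ν → ℝ^ν be C¹; let λ : ℝ^ν → ℂ be C⁰ and v : ℝ^ν → ℂ^ν be C¹ with [v(w), s(w)] = λ(w) v(w) on ℝ^ν. Suppose π : ℝ^ν → ℝ^n is C² and satisfies f(π(w)) + g(π(w)) l(w) = (∂π/∂w)(w) s(w) and k(π(w)) = l(w) on ℝ^ν. Suppose λ̃ : ℝ^n → ℂ (C⁰) and ṽ : ℝ^n → ℂ^n (C¹) satisfy λ̃(π(w)) = λ(w) and ṽ(π(w)) = (∂π/∂w)(w) v(w) with ṽ(π(w)) ≠ 0 for all w. Then, with f̃(x) := f(x) + g(x) k(x), the Lie bracket identity [ṽ(x), f̃(x)] = λ̃(x) ṽ(x) holds at every x = π(w), w ∈ ℝ^ν. -/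
open Matrix

/-- Jacobian matrix of a real vector-valued map. -/
noncomputable def jacR {n m : ℕ} (f : (Fin n → ℝ) → (Fin m → ℝ)) (x : Fin n → ℝ) :
    Matrix (Fin m) (Fin n) ℝ :=
  fun i j => fderiv ℝ (fun y => f y i) x (Pi.single j 1)

/-- Jacobian matrix of a complex vector-valued map of a real variable. -/
noncomputable def jacC {n m : ℕ} (f : (Fin n → ℝ) → (Fin m → ℂ)) (x : Fin n → ℝ) :
    Matrix (Fin m) (Fin n) ℂ :=
  fun i j => fderiv ℝ (fun y => f y i) x (Pi.single j 1)

/-- Lie bracket of a complex vector field `v` and a real vector field `s`. -/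
noncomputable def lieBkt {n : ℕ} (v : (Fin n → ℝ) → (Fin n → ℂ))
    (s : (Fin n → ℝ) → (Fin n → ℝ)) (x : Fin n → ℝ) : Fin n → ℂ :=
  ((jacR s x).map (Complex.ofReal ·)).mulVec (v x)
    - (jacC v x).mulVec (fun i => (s x i : ℂ))

section helpers

/-- Chain rule, expanded along coordinates. -/
lemma chain_single {ν n : ℕ} {F : Type*} [NormedAddCommGroup F] [NormedSpace ℝ F]
    (p : (Fin ν → ℝ) → (Fin n → ℝ)) (φ : (Fin n → ℝ) → F) (w : Fin ν → ℝ)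
    (hp : Differentiable ℝ p) (hφ : DifferentiableAt ℝ φ (p w)) (u : Fin ν → ℝ) :
    fderiv ℝ (fun w => φ (p w)) w u
      = ∑ j, (fderiv ℝ (fun w => p w j) w u) • fderiv ℝ φ (p w) (Pi.single j 1) := by
  have hco : (fun w => φ (p w)) = φ ∘ p := rfl
  rw [hco, fderiv_comp w hφ (hp w)]
  have hpj : ∀ j, DifferentiableAt ℝ (fun w => p w j) w := fun j =>
    (differentiable_pi.mp hp j w)
  have hpi : fderiv ℝ p w = ContinuousLinearMap.pi (fun j => fderiv ℝ (fun w => p w j) w) :=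
    fderiv_pi hpj
  rw [ContinuousLinearMap.comp_apply, hpi]
  have he : (ContinuousLinearMap.pi (fun j => fderiv ℝ (fun w => p w j) w)) u
      = ∑ j, (fderiv ℝ (fun w => p w j) w u) • (Pi.single j 1 : Fin n → ℝ) := by
    funext j'
    simp [ContinuousLinearMap.pi_apply, Finset.sum_apply, Pi.single_apply]
  rw [he, map_sum]
  simp [_root_.map_smul]

lemma sndSymm {ν : ℕ} (q : (Fin ν → ℝ) → ℝ) (hq : ContDiff ℝ 2 q) (w : Fin ν → ℝ) (a b : Fin ν) :
    fderiv ℝ (fun w => fderiv ℝ q w (Pi.single b 1)) w (Pi.single a 1)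
      = fderiv ℝ (fun w => fderiv ℝ q w (Pi.single a 1)) w (Pi.single b 1) := by
  have hd : DifferentiableAt ℝ (fderiv ℝ q) w := by
    have : ContDiff ℝ 1 (fderiv ℝ q) := hq.fderiv_right (m := 1) (by norm_num)
    exact (this.differentiable one_ne_zero).differentiableAt
  have h1 : ∀ u : Fin ν → ℝ, fderiv ℝ (fun w => fderiv ℝ q w u) w
      = (fderiv ℝ (fderiv ℝ q) w).flip u := by
    intro u
    have := fderiv_clm_apply (𝕜 := ℝ) (c := fderiv ℝ q) (u := fun _ => u) hd
      (differentiableAt_const u)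
    simpa using this
  have hsym : IsSymmSndFDerivAt ℝ q w := hq.contDiffAt.isSymmSndFDerivAt (by norm_num)
  rw [h1, h1]
  simp only [ContinuousLinearMap.flip_apply]
  exact hsym _ _

lemma fderiv_ofReal_comp {E : Type*} [NormedAddCommGroup E] [NormedSpace ℝ E]
    (c : E → ℝ) (x : E) (hc : DifferentiableAt ℝ c x) (u : E) :
    fderiv ℝ (fun y => ((c y : ℝ) : ℂ)) x u = (fderiv ℝ c x u : ℂ) := by
  have hco : (fun y => ((c y : ℝ) : ℂ)) = (Complex.ofRealCLM : ℝ →L[ℝ] ℂ) ∘ c := rfl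
  rw [hco, fderiv_comp x (Complex.ofRealCLM.differentiableAt) hc]
  simp [ContinuousLinearMap.fderiv]

/-- The key algebraic identity. -/
lemma alg {n ν : ℕ} (Jf Jt T Fc : Fin n → ℂ)
    (P : Fin n → Fin ν → ℂ) (Q Ds Dv : Fin ν → Fin ν → ℂ)
    (V S : Fin ν → ℂ) (lam : ℂ) (i : Fin n)
    (hQ : ∀ a b, Q a b = Q b a)
    (hT : ∀ j, T j = ∑ a, P j a * V a)
    (hF : ∀ j, Fc j = ∑ a, P j a * S a)
    (hEq2 : ∀ a, ∑ j, Jf j * P j a = ∑ b, (Q a b * S b + P i b * Ds b a))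
    (hEq1 : ∀ a, ∑ j, Jt j * P j a = ∑ b, (Q a b * V b + P i b * Dv b a))
    (heig : ∀ b, (∑ a, Ds b a * V a) - (∑ a, Dv b a * S a) = lam * V b) :
    (∑ j, Jf j * T j) - (∑ j, Jt j * Fc j) = lam * T i := by
  have e1 : (∑ j, Jf j * T j) = ∑ a, (∑ j, Jf j * P j a) * V a := by
    simp only [hT, Finset.mul_sum]
    rw [Finset.sum_comm]
    refine Finset.sum_congr rfl fun a _ => ?_
    rw [Finset.sum_mul]
    exact Finset.sum_congr rfl fun j _ => (mul_assoc _ _ _).symm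
  have e2 : (∑ j, Jt j * Fc j) = ∑ a, (∑ j, Jt j * P j a) * S a := by
    simp only [hF, Finset.mul_sum]
    rw [Finset.sum_comm]
    refine Finset.sum_congr rfl fun a _ => ?_
    rw [Finset.sum_mul]
    exact Finset.sum_congr rfl fun j _ => (mul_assoc _ _ _).symm
  rw [e1, e2]
  simp only [hEq2, hEq1, Finset.sum_mul, add_mul, Finset.sum_add_distrib]
  have c1 : ∑ a, ∑ b, Q a b * S b * V a = ∑ a, ∑ b, Q a b * V b * S a := by
    rw [Finset.sum_comm]
    exact Finset.sum_congr rfl fun a _ => Finset.sum_congr rfl fun b _ => by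
      rw [hQ]; ring
  rw [c1]
  have c2 : (∑ a, ∑ b, P i b * Ds b a * V a) - (∑ a, ∑ b, P i b * Dv b a * S a)
      = ∑ b, P i b * ((∑ a, Ds b a * V a) - (∑ a, Dv b a * S a)) := by
    rw [Finset.sum_comm (f := fun a b => P i b * Ds b a * V a),
        Finset.sum_comm (f := fun a b => P i b * Dv b a * S a)]
    rw [← Finset.sum_sub_distrib]
    exact Finset.sum_congr rfl fun b _ => by
      rw [mul_sub, Finset.mul_sum, Finset.mul_sum]
      congr 1 <;> exact Finset.sum_congr rfl fun a _ => by ring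
  have goal2 : ∑ b, P i b * ((∑ a, Ds b a * V a) - (∑ a, Dv b a * S a)) = lam * T i := by
    simp only [heig, hT]
    rw [Finset.mul_sum]
    exact Finset.sum_congr rfl fun b _ => by ring
  calc (∑ a, ∑ b, Q a b * V b * S a) + ∑ a, ∑ b, P i b * Ds b a * V a
        - ((∑ a, ∑ b, Q a b * V b * S a) + ∑ a, ∑ b, P i b * Dv b a * S a)
      = (∑ a, ∑ b, P i b * Ds b a * V a) - (∑ a, ∑ b, P i b * Dv b a * S a) := by ring
    _ = lam * T i := by rw [c2, goal2]

end helpers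

/-- partial nonlinear right eigenvalue assignment (Theorem 1 of the paper).
On the image of `π`, `(λ̃, ṽ)` is a nonlinear right eigenpair of the closed loop
`f̃ = f + g·k`. -/
theorem stmt_10 (n m ν : ℕ)
    (f : (Fin n → ℝ) → (Fin n → ℝ)) (g : (Fin n → ℝ) → Matrix (Fin n) (Fin m) ℝ)
    (k : (Fin n → ℝ) → (Fin m → ℝ)) (l : (Fin ν → ℝ) → (Fin m → ℝ))
    (s : (Fin ν → ℝ) → (Fin ν → ℝ)) (p : (Fin ν → ℝ) → (Fin n → ℝ))
    (lam : (Fin ν → ℝ) → ℂ) (v : (Fin ν → ℝ) → (Fin ν → ℂ))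
    (tlam : (Fin n → ℝ) → ℂ) (tv : (Fin n → ℝ) → (Fin n → ℂ))
    (hf : ContDiff ℝ 1 f) (hg : ∀ i j, ContDiff ℝ 1 fun x => g x i j)
    (hk : ContDiff ℝ 1 k) (hl : ContDiff ℝ 1 l) (hs : ContDiff ℝ 1 s)
    (hp : ContDiff ℝ 2 p)
    (hlam : Continuous lam) (hv : ContDiff ℝ 1 v)
    (htlam : Continuous tlam) (htv : ContDiff ℝ 1 tv)
    (heig : ∀ w, lieBkt v s w = lam w • v w)
    (hsyl : ∀ w, f (p w) + (g (p w)).mulVec (l w) = (jacR p w).mulVec (s w))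
    (hmatch : ∀ w, k (p w) = l w)
    (htlam_eq : ∀ w, tlam (p w) = lam w)
    (htv_eq : ∀ w, tv (p w) = ((jacR p w).map (Complex.ofReal ·)).mulVec (v w))
    (htv_ne : ∀ w, tv (p w) ≠ 0) :
    ∀ w, lieBkt tv (fun x => f x + (g x).mulVec (k x)) (p w)
      = tlam (p w) • tv (p w) := by
  intro w
  have hpD : Differentiable ℝ p := hp.differentiable (by norm_num)
  have hpj2 : ∀ j, ContDiff ℝ 2 fun y => p y j := fun j => contDiff_pi.mp hp j
  have hsj : ∀ b, ContDiff ℝ 1 fun y => s y b := fun b => contDiff_pi.mp hs b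
  have hvj : ∀ b, ContDiff ℝ 1 fun y => v y b := fun b => contDiff_pi.mp hv b
  have htvj : ∀ i, ContDiff ℝ 1 fun x => tv x i := fun i => contDiff_pi.mp htv i
  have hDP : ∀ (i : Fin n) (b : Fin ν),
      ContDiff ℝ 1 fun w' => fderiv ℝ (fun y => p y i) w' (Pi.single b 1) := fun i b =>
    ((hpj2 i).fderiv_right (m := 1) (by norm_num)).clm_apply contDiff_const
  have hFti : ∀ i : Fin n, ContDiff ℝ 1 fun x => f x i + ∑ jj, g x i jj * k x jj := fun i =>
    (contDiff_pi.mp hf i).add (ContDiff.sum fun jj _ => (hg i jj).mul (contDiff_pi.mp hk jj))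
  -- componentwise versions of hsyl/hmatch and htv_eq
  have hF : ∀ (i : Fin n) (w' : Fin ν → ℝ),
      f (p w') i + ∑ jj, g (p w') i jj * k (p w') jj
        = ∑ b, fderiv ℝ (fun y => p y i) w' (Pi.single b 1) * s w' b := by
    intro i w'
    have h1 := congrFun (hsyl w') i
    simpa [Matrix.mulVec, dotProduct, jacR, Pi.add_apply, ← hmatch w'] using h1
  have hV : ∀ (i : Fin n) (w' : Fin ν → ℝ),
      tv (p w') i = ∑ b, ((fderiv ℝ (fun y => p y i) w' (Pi.single b 1) : ℝ) : ℂ) * v w' b := by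
    intro i w'
    have h1 := congrFun (htv_eq w') i
    simpa [Matrix.mulVec, dotProduct, jacR, Matrix.map_apply] using h1
  -- differentiated closed-loop invariance relation (real)
  have key2 : ∀ (i : Fin n) (a : Fin ν),
      ∑ j, fderiv ℝ (fun y => f y i + ∑ jj, g y i jj * k y jj) (p w) (Pi.single j 1)
            * fderiv ℝ (fun y => p y j) w (Pi.single a 1)
        = ∑ b, (fderiv ℝ (fun w' => fderiv ℝ (fun y => p y i) w' (Pi.single b 1)) w
                  (Pi.single a 1) * s w b
            + fderiv ℝ (fun y => p y i) w (Pi.single b 1)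
                * fderiv ℝ (fun y => s y b) w (Pi.single a 1)) := by
    intro i a
    have hL := chain_single p (fun x => f x i + ∑ jj, g x i jj * k x jj) w hpD
      (((hFti i).differentiable one_ne_zero) (p w)) (Pi.single a 1)
    beta_reduce at hL
    have hfe2 : fderiv ℝ (fun w' => f (p w') i + ∑ jj, g (p w') i jj * k (p w') jj) w
        = fderiv ℝ (fun w' => ∑ b, fderiv ℝ (fun y => p y i) w' (Pi.single b 1) * s w' b) w := by
      congr 1
      funext w'
      exact hF i w'
    have hR : fderiv ℝ (fun w' => ∑ b, fderiv ℝ (fun y => p y i) w' (Pi.single b 1) * s w' b) w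
          (Pi.single a 1)
        = ∑ b, (fderiv ℝ (fun w' => fderiv ℝ (fun y => p y i) w' (Pi.single b 1)) w
              (Pi.single a 1) * s w b
            + fderiv ℝ (fun y => p y i) w (Pi.single b 1)
              * fderiv ℝ (fun y => s y b) w (Pi.single a 1)) := by
      rw [fderiv_fun_sum (fun b _ =>
        (((hDP i b).differentiable one_ne_zero) w).fun_mul (((hsj b).differentiable one_ne_zero) w))]
      rw [ContinuousLinearMap.sum_apply]
      refine Finset.sum_congr rfl fun b _ => ?_
      rw [fderiv_fun_mul (((hDP i b).differentiable one_ne_zero) w) (((hsj b).differentiable one_ne_zero) w)]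
      simp only [ContinuousLinearMap.add_apply, ContinuousLinearMap.smul_apply, smul_eq_mul]
      ring
    calc ∑ j, fderiv ℝ (fun y => f y i + ∑ jj, g y i jj * k y jj) (p w) (Pi.single j 1)
            * fderiv ℝ (fun y => p y j) w (Pi.single a 1)
        = ∑ j, fderiv ℝ (fun y => p y j) w (Pi.single a 1)
            • fderiv ℝ (fun y => f y i + ∑ jj, g y i jj * k y jj) (p w) (Pi.single j 1) :=
          Finset.sum_congr rfl fun j _ => by rw [smul_eq_mul, mul_comm]
      _ = fderiv ℝ (fun w' => f (p w') i + ∑ jj, g (p w') i jj * k (p w') jj) w (Pi.single a 1) :=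
          hL.symm
      _ = _ := by rw [hfe2, hR]
  -- differentiated eigenvector-matching relation (complex)
  have key1 : ∀ (i : Fin n) (a : Fin ν),
      ∑ j, fderiv ℝ (fun y => tv y i) (p w) (Pi.single j 1)
            * ((fderiv ℝ (fun y => p y j) w (Pi.single a 1) : ℝ) : ℂ)
        = ∑ b, (((fderiv ℝ (fun w' => fderiv ℝ (fun y => p y i) w' (Pi.single b 1)) w
                  (Pi.single a 1) : ℝ) : ℂ) * v w b
            + ((fderiv ℝ (fun y => p y i) w (Pi.single b 1) : ℝ) : ℂ)
                * fderiv ℝ (fun y => v y b) w (Pi.single a 1)) := by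
    intro i a
    have hL := chain_single p (fun x => tv x i) w hpD
      (((htvj i).differentiable one_ne_zero) (p w)) (Pi.single a 1)
    beta_reduce at hL
    have hfe2 : fderiv ℝ (fun w' => tv (p w') i) w
        = fderiv ℝ (fun w' => ∑ b,
            ((fderiv ℝ (fun y => p y i) w' (Pi.single b 1) : ℝ) : ℂ) * v w' b) w := by
      congr 1
      funext w'
      exact hV i w'
    have hcb : ∀ b : Fin ν, DifferentiableAt ℝ
        (fun w' => ((fderiv ℝ (fun y => p y i) w' (Pi.single b 1) : ℝ) : ℂ)) w := by
      intro b
      exact (Complex.ofRealCLM.differentiable.comp ((hDP i b).differentiable one_ne_zero)).differentiableAt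
    have hR : fderiv ℝ (fun w' => ∑ b,
          ((fderiv ℝ (fun y => p y i) w' (Pi.single b 1) : ℝ) : ℂ) * v w' b) w (Pi.single a 1)
        = ∑ b, (((fderiv ℝ (fun w' => fderiv ℝ (fun y => p y i) w' (Pi.single b 1)) w
              (Pi.single a 1) : ℝ) : ℂ) * v w b
            + ((fderiv ℝ (fun y => p y i) w (Pi.single b 1) : ℝ) : ℂ)
              * fderiv ℝ (fun y => v y b) w (Pi.single a 1)) := by
      rw [fderiv_fun_sum (fun b _ => (hcb b).fun_mul (((hvj b).differentiable one_ne_zero) w))]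
      rw [ContinuousLinearMap.sum_apply]
      refine Finset.sum_congr rfl fun b _ => ?_
      rw [fderiv_fun_mul (hcb b) (((hvj b).differentiable one_ne_zero) w)]
      have hofr := fderiv_ofReal_comp
        (fun w' => fderiv ℝ (fun y => p y i) w' (Pi.single b 1)) w
        (((hDP i b).differentiable one_ne_zero) w) (Pi.single a 1)
      beta_reduce at hofr
      simp only [ContinuousLinearMap.add_apply, ContinuousLinearMap.smul_apply, hofr,
        smul_eq_mul, Complex.real_smul]
      ring
    calc ∑ j, fderiv ℝ (fun y => tv y i) (p w) (Pi.single j 1)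
            * ((fderiv ℝ (fun y => p y j) w (Pi.single a 1) : ℝ) : ℂ)
        = ∑ j, fderiv ℝ (fun y => p y j) w (Pi.single a 1)
            • fderiv ℝ (fun y => tv y i) (p w) (Pi.single j 1) :=
          Finset.sum_congr rfl fun j _ => by rw [Complex.real_smul, mul_comm]
      _ = fderiv ℝ (fun w' => tv (p w') i) w (Pi.single a 1) := hL.symm
      _ = _ := by rw [hfe2, hR]
  -- eigenpair relation, componentwise
  have heig' : ∀ b : Fin ν,
      (∑ a, ((fderiv ℝ (fun y => s y b) w (Pi.single a 1) : ℝ) : ℂ) * v w a)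
        - (∑ a, fderiv ℝ (fun y => v y b) w (Pi.single a 1) * ((s w a : ℝ) : ℂ))
      = lam w * v w b := by
    intro b
    have h1 := congrFun (heig w) b
    simpa [lieBkt, Matrix.mulVec, dotProduct, jacR, jacC, Matrix.map_apply, Pi.sub_apply,
      Pi.smul_apply, smul_eq_mul] using h1
  -- assemble
  funext i
  simp only [lieBkt, Matrix.mulVec, dotProduct, jacR, jacC, Matrix.map_apply, Pi.sub_apply,
    Pi.smul_apply, smul_eq_mul, Pi.add_apply, htlam_eq w]
  exact alg
    (fun j => ((fderiv ℝ (fun y => f y i + ∑ jj, g y i jj * k y jj) (p w) (Pi.single j 1) : ℝ) : ℂ))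
    (fun j => fderiv ℝ (fun y => tv y i) (p w) (Pi.single j 1))
    (fun j => tv (p w) j)
    (fun j => ((f (p w) j + ∑ jj, g (p w) j jj * k (p w) jj : ℝ) : ℂ))
    (fun j a => ((fderiv ℝ (fun y => p y j) w (Pi.single a 1) : ℝ) : ℂ))
    (fun a b => ((fderiv ℝ (fun w' => fderiv ℝ (fun y => p y i) w' (Pi.single b 1)) w
        (Pi.single a 1) : ℝ) : ℂ))
    (fun b a => ((fderiv ℝ (fun y => s y b) w (Pi.single a 1) : ℝ) : ℂ))
    (fun b a => fderiv ℝ (fun y => v y b) w (Pi.single a 1))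
    (v w) (fun a => ((s w a : ℝ) : ℂ)) (lam w) i
    (fun a b => congrArg (fun r : ℝ => (r : ℂ)) (sndSymm _ (hpj2 i) w a b))
    (fun j => hV j w)
    (fun j => by beta_reduce; exact_mod_cast hF j w)
    (fun a => by beta_reduce; exact_mod_cast key2 i a)
    (fun a => key1 i a)
    heig'
end

section
/- (Partial nonlinear left eigenvalue assignment) Let F̃ : ℝ^N → ℝ^N and ρ : ℝ^N → ℝ^ν be C² with −s(−ρ(z)) = (∂ρ/∂z)(z) F̃(z) on ℝ^N for some C¹ map s : ℝ^ν → ℝ^ν. Let λ : ℝ^ν → ℂ (C⁰) and v : ℝ^ν → ℂ^ν (C¹) satisfy the left eigenvalue equation vᵀ(w)(∂s/∂w)(w) + ((∂v/∂w)(w) s(w))ᵀ = λ(w) vᵀ(w) on ℝ^ν. Define λ̃(z) := λ(−ρ(z)) and ṽᵀ(z) := −vᵀ(−ρ(z)) (∂ρ/∂z)(z), and assume ṽ is nowhere zero. Then ṽᵀ(z)(∂F̃/∂z)(z) + ((∂ṽ/∂z)(z) F̃(z))ᵀ = λ̃(z) ṽᵀ(z) on ℝ^N. -/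
open Matrix

/-- Left-hand side of the nonlinear left eigenvalue equation
`vᵀ(∂s/∂z) + ((∂v/∂z)s)ᵀ`, viewed as a vector. -/
noncomputable def leftSide {N : ℕ} (v : (Fin N → ℝ) → (Fin N → ℂ))
    (s : (Fin N → ℝ) → (Fin N → ℝ)) (z : Fin N → ℝ) : Fin N → ℂ :=
  Matrix.vecMul (v z) ((jacR s z).map (Complex.ofReal ·))
    + (jacC v z).mulVec (fun i => (s z i : ℂ))

section helpers
variable {n : ℕ}

lemma pi_eq_sum_single' (u : Fin n → ℝ) : u = ∑ j, u j • (Pi.single j 1 : Fin n → ℝ) := by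
  funext x
  simp [Finset.sum_apply, Pi.single_apply]

lemma clm_apply_eq_sum {M : Type*} [NormedAddCommGroup M] [NormedSpace ℝ M]
    (L : (Fin n → ℝ) →L[ℝ] M) (u : Fin n → ℝ) :
    L u = ∑ j, u j • L (Pi.single j 1) := by
  conv_lhs => rw [pi_eq_sum_single' u]
  simp [map_sum]

lemma clm_apply_eq_sum_real (L : (Fin n → ℝ) →L[ℝ] ℝ) (u : Fin n → ℝ) :
    L u = ∑ j, L (Pi.single j 1) * u j := by
  rw [clm_apply_eq_sum]
  simp [mul_comm]

lemma clm_apply_eq_sum_cx (L : (Fin n → ℝ) →L[ℝ] ℂ) (u : Fin n → ℝ) :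
    L u = ∑ j, L (Pi.single j 1) * ((u j : ℝ) : ℂ) := by
  rw [clm_apply_eq_sum]
  congr 1; funext j
  rw [Complex.real_smul, mul_comm]

lemma fderiv_proj {E F : Type*} [NormedAddCommGroup E] [NormedSpace ℝ E]
    [NormedAddCommGroup F] [NormedSpace ℝ F] {ι : Type*} [Fintype ι] [DecidableEq ι]
    {f : E → ι → F} {x : E} (hf : DifferentiableAt ℝ f x) (i : ι) :
    fderiv ℝ (fun y => f y i) x = (ContinuousLinearMap.proj i).comp (fderiv ℝ f x) :=
  (((ContinuousLinearMap.proj i : (ι → F) →L[ℝ] F).hasFDerivAt).comp x hf.hasFDerivAt).fderiv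

lemma fderiv_proj_apply {E F : Type*} [NormedAddCommGroup E] [NormedSpace ℝ E]
    [NormedAddCommGroup F] [NormedSpace ℝ F] {ι : Type*} [Fintype ι] [DecidableEq ι]
    {f : E → ι → F} {x : E} (hf : DifferentiableAt ℝ f x) (i : ι) (u : E) :
    fderiv ℝ (fun y => f y i) x u = fderiv ℝ f x u i := by
  rw [fderiv_proj hf i]; rfl

end helpers

/-- partial nonlinear left eigenvalue assignment (Theorem 3 of the paper):
`(λ̃, ṽ)` with `λ̃(z) = λ(−ρ(z))` and `ṽᵀ(z) = −vᵀ(−ρ(z))(∂ρ/∂z)(z)` is a nonlinear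
left eigenpair of `ż = F̃(z)`. -/
theorem stmt_12 (N ν : ℕ)
    (Ft : (Fin N → ℝ) → (Fin N → ℝ)) (ρ : (Fin N → ℝ) → (Fin ν → ℝ))
    (s : (Fin ν → ℝ) → (Fin ν → ℝ))
    (lam : (Fin ν → ℝ) → ℂ) (v : (Fin ν → ℝ) → (Fin ν → ℂ))
    (tlam : (Fin N → ℝ) → ℂ) (tv : (Fin N → ℝ) → (Fin N → ℂ))
    (hFt : ContDiff ℝ 2 Ft) (hρ : ContDiff ℝ 2 ρ) (hs : ContDiff ℝ 1 s)
    (hlam : Continuous lam) (hv : ContDiff ℝ 1 v)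
    (himm : ∀ z, -s (-(ρ z)) = (jacR ρ z).mulVec (Ft z))
    (heig : ∀ w, Matrix.vecMul (v w) ((jacR s w).map (Complex.ofReal ·))
        + (jacC v w).mulVec (fun i => (s w i : ℂ)) = lam w • v w)
    (htlam : ∀ z, tlam z = lam (-(ρ z)))
    (htv : ∀ z, tv z = -(Matrix.vecMul (v (-(ρ z))) ((jacR ρ z).map (Complex.ofReal ·))))
    (htv_ne : ∀ z, tv z ≠ 0) :
    ∀ z, leftSide tv Ft z = tlam z • tv z := by
  intro z
  have hρd : Differentiable ℝ ρ := hρ.differentiable two_ne_zero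
  have hWc : ContDiff ℝ 2 (fun y => -(ρ y)) := hρ.neg
  have hWd : Differentiable ℝ (fun y => -(ρ y)) := hρd.neg
  have hFtd : Differentiable ℝ Ft := hFt.differentiable two_ne_zero
  have hsd : Differentiable ℝ s := hs.differentiable one_ne_zero
  have hvd : Differentiable ℝ v := hv.differentiable one_ne_zero
  have hW' : Differentiable ℝ (fderiv ℝ (fun y => -(ρ y))) :=
    (hWc.fderiv_right (m := 1) (by norm_num)).differentiable one_ne_zero
  have hvdi : ∀ i, Differentiable ℝ (fun w => v w i) := fun i =>
    ((ContinuousLinearMap.proj i : (Fin ν → ℂ) →L[ℝ] ℂ).differentiable).comp hvd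
  -- coordinate formula for the derivative of W = -ρ
  have hWcoord : ∀ (y u : Fin N → ℝ) (i : Fin ν),
      fderiv ℝ (fun x => -(ρ x)) y u i = -(fderiv ℝ (fun x => ρ x i) y u) := by
    intro y u i
    have hcomp := fderiv_proj_apply (f := fun x => -(ρ x)) (hWd y) i u
    have e1 : fderiv ℝ (fun x => (fun x => -(ρ x)) x i) y = fderiv ℝ (fun x => -(ρ x i)) y := rfl
    rw [e1, fderiv_fun_neg] at hcomp
    rw [← hcomp]
    simp
  -- the immersion identity, reformulated
  have himm' : ∀ y, s (-(ρ y)) = fderiv ℝ (fun x => -(ρ x)) y (Ft y) := by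
    intro y
    have h2 : s (-(ρ y)) = -((jacR ρ y).mulVec (Ft y)) := by
      rw [← himm y]; simp
    funext i
    rw [h2, hWcoord y (Ft y) i]
    have hsum : fderiv ℝ (fun x => ρ x i) y (Ft y)
        = ∑ j, fderiv ℝ (fun x => ρ x i) y (Pi.single j 1) * Ft y j :=
      clm_apply_eq_sum_real _ _
    rw [hsum]
    simp only [Pi.neg_apply, Matrix.mulVec, dotProduct, jacR]
  -- tv, reformulated
  have tvB : ∀ (y : Fin N → ℝ) (k : Fin N),
      tv y k = ∑ i, v (-(ρ y)) i
        * ((fderiv ℝ (fun x => -(ρ x)) y (Pi.single k 1) i : ℝ) : ℂ) := by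
    intro y k
    rw [htv y]
    simp only [Pi.neg_apply, Matrix.vecMul, dotProduct, Matrix.map_apply, jacR]
    rw [← Finset.sum_neg_distrib]
    refine Finset.sum_congr rfl fun i _ => ?_
    rw [hWcoord y (Pi.single k 1) i]
    push_cast
    ring
  -- symmetry of the second derivative of W
  have hsymm : ∀ u w : Fin N → ℝ,
      fderiv ℝ (fderiv ℝ (fun x => -(ρ x))) z u w
        = fderiv ℝ (fderiv ℝ (fun x => -(ρ x))) z w u :=
    second_derivative_symmetric (fun y => (hWd y).hasFDerivAt) (hW' z).hasFDerivAt
  -- differentiating the immersion identity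
  have key1 : ∀ u, fderiv ℝ s (-(ρ z)) (fderiv ℝ (fun x => -(ρ x)) z u)
      = fderiv ℝ (fderiv ℝ (fun x => -(ρ x))) z (Ft z) u
        + fderiv ℝ (fun x => -(ρ x)) z (fderiv ℝ Ft z u) := by
    intro u
    have hfun : (fun y => s (-(ρ y))) = fun y => fderiv ℝ (fun x => -(ρ x)) y (Ft y) :=
      funext himm'
    have h1 : fderiv ℝ (fun y => s ((fun x => -(ρ x)) y)) z
        = (fderiv ℝ s (-(ρ z))).comp (fderiv ℝ (fun x => -(ρ x)) z) :=
      fderiv_comp (x := z) (hsd _) (hWd z)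
    rw [show (fun y => s ((fun x => -(ρ x)) y)) = (fun y => s (-(ρ y))) from rfl, hfun] at h1
    rw [fderiv_clm_apply (hW' z) (hFtd z)] at h1
    have h4 := DFunLike.congr_fun h1 u
    simp only [ContinuousLinearMap.add_apply, ContinuousLinearMap.comp_apply,
      ContinuousLinearMap.flip_apply] at h4
    rw [← h4, hsymm u (Ft z)]
    abel
  -- derivative of coordinates of tv along the dynamics
  have key2 : ∀ k : Fin N, fderiv ℝ (fun y => tv y k) z (Ft z)
      = ∑ i, (v (-(ρ z)) i
            * ((fderiv ℝ (fderiv ℝ (fun x => -(ρ x))) z (Ft z) (Pi.single k 1) i : ℝ) : ℂ)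
          + ((fderiv ℝ (fun x => -(ρ x)) z (Pi.single k 1) i : ℝ) : ℂ)
              * fderiv ℝ (fun w => v w i) (-(ρ z)) (s (-(ρ z)))) := by
    intro k
    have htvfun : (fun y => tv y k) = fun y => ∑ i, v (-(ρ y)) i
        * ((fderiv ℝ (fun x => -(ρ x)) y (Pi.single k 1) i : ℝ) : ℂ) :=
      funext fun y => tvB y k
    have h0 : HasFDerivAt (fderiv ℝ (fun x => -(ρ x)))
        (fderiv ℝ (fderiv ℝ (fun x => -(ρ x))) z) z := (hW' z).hasFDerivAt
    have hq : ∀ i : Fin ν, HasFDerivAt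
        (fun y => ((fderiv ℝ (fun x => -(ρ x)) y (Pi.single k 1) i : ℝ) : ℂ))
        (Complex.ofRealCLM.comp ((ContinuousLinearMap.proj i).comp
          ((ContinuousLinearMap.apply ℝ (Fin ν → ℝ) (Pi.single k 1)).comp
            (fderiv ℝ (fderiv ℝ (fun x => -(ρ x))) z)))) z := by
      intro i
      have h1 : HasFDerivAt (fun y => fderiv ℝ (fun x => -(ρ x)) y (Pi.single k 1))
          ((ContinuousLinearMap.apply ℝ (Fin ν → ℝ) (Pi.single k 1)).comp
            (fderiv ℝ (fderiv ℝ (fun x => -(ρ x))) z)) z :=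
        by exact ((ContinuousLinearMap.apply ℝ (Fin ν → ℝ) (Pi.single k 1)).hasFDerivAt).comp z (hW' z).hasFDerivAt
      have h2 : HasFDerivAt (fun y => fderiv ℝ (fun x => -(ρ x)) y (Pi.single k 1) i)
          ((ContinuousLinearMap.proj i).comp
            ((ContinuousLinearMap.apply ℝ (Fin ν → ℝ) (Pi.single k 1)).comp
              (fderiv ℝ (fderiv ℝ (fun x => -(ρ x))) z))) z :=
        ((ContinuousLinearMap.proj i : (Fin ν → ℝ) →L[ℝ] ℝ).hasFDerivAt).comp z h1
      exact Complex.ofRealCLM.hasFDerivAt.comp z h2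
    have hvW : ∀ i : Fin ν, HasFDerivAt (fun y => v (-(ρ y)) i)
        ((fderiv ℝ (fun w => v w i) (-(ρ z))).comp (fderiv ℝ (fun x => -(ρ x)) z)) z :=
      fun i => ((hvdi i _).hasFDerivAt).comp z (hWd z).hasFDerivAt
    have hS : HasFDerivAt (fun y => ∑ i, v (-(ρ y)) i
        * ((fderiv ℝ (fun x => -(ρ x)) y (Pi.single k 1) i : ℝ) : ℂ))
        (∑ i, (v (-(ρ z)) i • (Complex.ofRealCLM.comp ((ContinuousLinearMap.proj i).comp
          ((ContinuousLinearMap.apply ℝ (Fin ν → ℝ) (Pi.single k 1)).comp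
            (fderiv ℝ (fderiv ℝ (fun x => -(ρ x))) z))))
          + ((fderiv ℝ (fun x => -(ρ x)) z (Pi.single k 1) i : ℝ) : ℂ)
            • ((fderiv ℝ (fun w => v w i) (-(ρ z))).comp (fderiv ℝ (fun x => -(ρ x)) z)))) z :=
      HasFDerivAt.fun_sum fun i _ => (hvW i).mul (hq i)
    rw [htvfun, hS.fderiv]
    rw [ContinuousLinearMap.sum_apply]
    refine Finset.sum_congr rfl fun i _ => ?_
    simp only [ContinuousLinearMap.add_apply, ContinuousLinearMap.smul_apply,
      ContinuousLinearMap.comp_apply, ContinuousLinearMap.proj_apply,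
      ContinuousLinearMap.apply_apply, Complex.ofRealCLM_apply, smul_eq_mul]
    rw [← himm' z]
  -- eigenvalue identity at w = -(ρ z), coordinatewise
  have heig' : ∀ m : Fin ν,
      (∑ i, v (-(ρ z)) i * ((fderiv ℝ (fun x => s x i) (-(ρ z)) (Pi.single m 1) : ℝ) : ℂ))
        + fderiv ℝ (fun w => v w m) (-(ρ z)) (s (-(ρ z)))
      = lam (-(ρ z)) * v (-(ρ z)) m := by
    intro m
    have h := congrFun (heig (-(ρ z))) m
    simp only [Pi.add_apply, Pi.smul_apply, smul_eq_mul, Matrix.vecMul, dotProduct,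
      Matrix.mulVec, Matrix.map_apply, jacR, jacC] at h
    rw [← h]
    congr 1
    exact (clm_apply_eq_sum_cx (fderiv ℝ (fun w => v w m) (-(ρ z))) (s (-(ρ z)))).symm ▸ rfl
  -- coordinate expansions of linear maps
  have hAcomp : ∀ (u' : Fin N → ℝ) (i : Fin ν),
      fderiv ℝ (fun x => -(ρ x)) z u' i
        = ∑ j, u' j * fderiv ℝ (fun x => -(ρ x)) z (Pi.single j 1) i := by
    intro u' i
    rw [clm_apply_eq_sum (fderiv ℝ (fun x => -(ρ x)) z) u']
    simp [Finset.sum_apply]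
  have hscomp : ∀ (u' : Fin ν → ℝ) (i : Fin ν),
      fderiv ℝ s (-(ρ z)) u' i
        = ∑ m, fderiv ℝ (fun x => s x i) (-(ρ z)) (Pi.single m 1) * u' m := by
    intro u' i
    rw [← fderiv_proj_apply (hsd _) i u']
    exact clm_apply_eq_sum_real _ _
  -- final assembly
  funext k
  have hLS : leftSide tv Ft z k
      = (∑ j, tv z j * ((fderiv ℝ Ft z (Pi.single k 1) j : ℝ) : ℂ))
        + fderiv ℝ (fun y => tv y k) z (Ft z) := by
    simp only [leftSide, Pi.add_apply, Matrix.vecMul, dotProduct, Matrix.mulVec,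
      Matrix.map_apply, jacR, jacC]
    congr 1
    · refine Finset.sum_congr rfl fun j _ => ?_
      rw [fderiv_proj_apply (hFtd z) j]
    · exact (clm_apply_eq_sum_cx (fderiv ℝ (fun y => tv y k) z) (Ft z)).symm
  have c1 : (∑ j, tv z j * ((fderiv ℝ Ft z (Pi.single k 1) j : ℝ) : ℂ))
      = ∑ i, v (-(ρ z)) i
          * ((fderiv ℝ (fun x => -(ρ x)) z (fderiv ℝ Ft z (Pi.single k 1)) i : ℝ) : ℂ) := by
    calc (∑ j, tv z j * ((fderiv ℝ Ft z (Pi.single k 1) j : ℝ) : ℂ))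
        = ∑ j, ∑ i, v (-(ρ z)) i
            * ((fderiv ℝ (fun x => -(ρ x)) z (Pi.single j 1) i : ℝ) : ℂ)
            * ((fderiv ℝ Ft z (Pi.single k 1) j : ℝ) : ℂ) := by
          refine Finset.sum_congr rfl fun j _ => ?_
          rw [tvB z j, Finset.sum_mul]
      _ = ∑ i, ∑ j, v (-(ρ z)) i
            * ((fderiv ℝ (fun x => -(ρ x)) z (Pi.single j 1) i : ℝ) : ℂ)
            * ((fderiv ℝ Ft z (Pi.single k 1) j : ℝ) : ℂ) := Finset.sum_comm
      _ = ∑ i, v (-(ρ z)) i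
            * ((fderiv ℝ (fun x => -(ρ x)) z (fderiv ℝ Ft z (Pi.single k 1)) i : ℝ) : ℂ) := by
          refine Finset.sum_congr rfl fun i _ => ?_
          rw [hAcomp (fderiv ℝ Ft z (Pi.single k 1)) i]
          push_cast
          rw [Finset.mul_sum]
          refine Finset.sum_congr rfl fun j _ => by ring
  have c2 : ∀ i : Fin ν,
      (fderiv ℝ (fderiv ℝ (fun x => -(ρ x))) z (Ft z) (Pi.single k 1) i : ℝ)
      = fderiv ℝ s (-(ρ z)) (fderiv ℝ (fun x => -(ρ x)) z (Pi.single k 1)) i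
        - fderiv ℝ (fun x => -(ρ x)) z (fderiv ℝ Ft z (Pi.single k 1)) i := by
    intro i
    have h5 := congrFun (key1 (Pi.single k 1)) i
    simp only [Pi.add_apply] at h5
    linarith
  rw [hLS, key2 k, c1]
  calc (∑ i, v (-(ρ z)) i
          * ((fderiv ℝ (fun x => -(ρ x)) z (fderiv ℝ Ft z (Pi.single k 1)) i : ℝ) : ℂ))
      + ∑ i, (v (-(ρ z)) i
            * ((fderiv ℝ (fderiv ℝ (fun x => -(ρ x))) z (Ft z) (Pi.single k 1) i : ℝ) : ℂ)
          + ((fderiv ℝ (fun x => -(ρ x)) z (Pi.single k 1) i : ℝ) : ℂ)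
              * fderiv ℝ (fun w => v w i) (-(ρ z)) (s (-(ρ z))))
      = ∑ i, (v (-(ρ z)) i
            * ((fderiv ℝ s (-(ρ z)) (fderiv ℝ (fun x => -(ρ x)) z (Pi.single k 1)) i : ℝ) : ℂ)
          + ((fderiv ℝ (fun x => -(ρ x)) z (Pi.single k 1) i : ℝ) : ℂ)
              * fderiv ℝ (fun w => v w i) (-(ρ z)) (s (-(ρ z)))) := by
        rw [← Finset.sum_add_distrib]
        refine Finset.sum_congr rfl fun i _ => ?_
        rw [c2 i]
        push_cast
        ring
    _ = (∑ i, ∑ m, ((fderiv ℝ (fun x => -(ρ x)) z (Pi.single k 1) m : ℝ) : ℂ)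
            * (v (-(ρ z)) i
              * ((fderiv ℝ (fun x => s x i) (-(ρ z)) (Pi.single m 1) : ℝ) : ℂ)))
        + ∑ m, ((fderiv ℝ (fun x => -(ρ x)) z (Pi.single k 1) m : ℝ) : ℂ)
            * fderiv ℝ (fun w => v w m) (-(ρ z)) (s (-(ρ z))) := by
        rw [Finset.sum_add_distrib]
        congr 1
        refine Finset.sum_congr rfl fun i _ => ?_
        rw [hscomp (fderiv ℝ (fun x => -(ρ x)) z (Pi.single k 1)) i]
        push_cast
        rw [Finset.mul_sum]
        refine Finset.sum_congr rfl fun m _ => by ring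
    _ = ∑ m, ((fderiv ℝ (fun x => -(ρ x)) z (Pi.single k 1) m : ℝ) : ℂ)
          * ((∑ i, v (-(ρ z)) i
              * ((fderiv ℝ (fun x => s x i) (-(ρ z)) (Pi.single m 1) : ℝ) : ℂ))
            + fderiv ℝ (fun w => v w m) (-(ρ z)) (s (-(ρ z)))) := by
        rw [Finset.sum_comm, ← Finset.sum_add_distrib]
        refine Finset.sum_congr rfl fun m _ => ?_
        rw [mul_add, Finset.mul_sum]
    _ = ∑ m, ((fderiv ℝ (fun x => -(ρ x)) z (Pi.single k 1) m : ℝ) : ℂ)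
          * (lam (-(ρ z)) * v (-(ρ z)) m) := by
        refine Finset.sum_congr rfl fun m _ => ?_
        rw [heig' m]
    _ = lam (-(ρ z)) * ∑ m, v (-(ρ z)) m
          * ((fderiv ℝ (fun x => -(ρ x)) z (Pi.single k 1) m : ℝ) : ℂ) := by
        rw [Finset.mul_sum]
        refine Finset.sum_congr rfl fun m _ => by ring
    _ = tlam z • tv z k := by
        rw [htlam z, tvB z k, smul_eq_mul]
end

section
/- For the closed-loop vector field f̃(x₁,x₂) = (−x₁ − x₁²/2 + x₁x₂ − x₂² + φ(x₂ − x₁), −x₂ − x₂²/2 + φ(x₂ − x₁)), where φ : ℝ → ℝ is any C¹ function with φ(0) = 0, the pair λ(x) = −1 − x₂ with constant eigenvector v = (1,1) is a nonlinear right eigenpair on ℝ²: (∂f̃/∂x)(x) v = λ(x) v for all x ∈ ℝ². -/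
open Matrix

/-- for any `C¹` function `φ` with `φ(0) = 0`, the closed-loop field
`f̃(x) = (−x₁ − x₁²/2 + x₁x₂ − x₂² + φ(x₂−x₁), −x₂ − x₂²/2 + φ(x₂−x₁))` admits the
nonlinear right eigenpair `λ(x) = −1 − x₂`, `v = (1,1)`. -/
theorem stmt_17 (φ : ℝ → ℝ) (hφ : ContDiff ℝ 1 φ) (hφ0 : φ 0 = 0) :
    ∀ x : Fin 2 → ℝ,
      (jacR (fun x : Fin 2 → ℝ =>
          ![-x 0 - (x 0) ^ 2 / 2 + x 0 * x 1 - (x 1) ^ 2 + φ (x 1 - x 0),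
            -x 1 - (x 1) ^ 2 / 2 + φ (x 1 - x 0)]) x).mulVec ![1, 1]
        = (-1 - x 1) • ![1, 1] := by
  intro x
  set P0 : (Fin 2 → ℝ) →L[ℝ] ℝ := ContinuousLinearMap.proj 0 with hP0def
  set P1 : (Fin 2 → ℝ) →L[ℝ] ℝ := ContinuousLinearMap.proj 1 with hP1def
  have hP0 : HasFDerivAt (fun y : Fin 2 → ℝ => y 0) P0 x := by
    exact
      (ContinuousLinearMap.proj (R := ℝ) (φ := fun _ : Fin 2 => ℝ) 0).hasFDerivAt (x := x)
  have hP1 : HasFDerivAt (fun y : Fin 2 → ℝ => y 1) P1 x := by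
    exact
      (ContinuousLinearMap.proj (R := ℝ) (φ := fun _ : Fin 2 => ℝ) 1).hasFDerivAt (x := x)
  have hphi : HasFDerivAt (fun y : Fin 2 → ℝ => φ (y 1 - y 0))
      ((deriv φ (x 1 - x 0)) • (P1 - P0)) x :=
    ((hφ.differentiable one_ne_zero (x 1 - x 0)).hasDerivAt).comp_hasFDerivAt x (hP1.sub hP0)
  have hsq0 : HasFDerivAt (fun y : Fin 2 → ℝ => y 0 ^ 2 / 2) (x 0 • P0) x := by
    have h : HasFDerivAt (fun y : Fin 2 → ℝ => (2:ℝ)⁻¹ * (y 0 * y 0))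
        ((2:ℝ)⁻¹ • (x 0 • P0 + x 0 • P0)) x := (hP0.mul hP0).const_mul _
    have hfun : (fun y : Fin 2 → ℝ => y 0 ^ 2 / 2) = fun y => (2:ℝ)⁻¹ * (y 0 * y 0) := by
      funext y; ring
    have hder : ((2:ℝ)⁻¹ • (x 0 • P0 + x 0 • P0)) = x 0 • P0 := by
      ext v; simp; ring
    rw [hfun, ← hder]; exact h
  have hsq1 : HasFDerivAt (fun y : Fin 2 → ℝ => y 1 ^ 2 / 2) (x 1 • P1) x := by
    have h : HasFDerivAt (fun y : Fin 2 → ℝ => (2:ℝ)⁻¹ * (y 1 * y 1))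
        ((2:ℝ)⁻¹ • (x 1 • P1 + x 1 • P1)) x := (hP1.mul hP1).const_mul _
    have hfun : (fun y : Fin 2 → ℝ => y 1 ^ 2 / 2) = fun y => (2:ℝ)⁻¹ * (y 1 * y 1) := by
      funext y; ring
    have hder : ((2:ℝ)⁻¹ • (x 1 • P1 + x 1 • P1)) = x 1 • P1 := by
      ext v; simp; ring
    rw [hfun, ← hder]; exact h
  have hsq1' : HasFDerivAt (fun y : Fin 2 → ℝ => y 1 ^ 2) (x 1 • P1 + x 1 • P1) x := by
    have h := hP1.mul hP1; simp only [pow_two]; exact h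
  have h0 : HasFDerivAt
      (fun y : Fin 2 → ℝ => -y 0 - (y 0) ^ 2 / 2 + y 0 * y 1 - (y 1) ^ 2 + φ (y 1 - y 0))
      (-P0 - x 0 • P0 + (x 0 • P1 + x 1 • P0) - (x 1 • P1 + x 1 • P1)
        + (deriv φ (x 1 - x 0)) • (P1 - P0)) x :=
    (((hP0.neg.sub hsq0).add (hP0.mul hP1)).sub hsq1').add hphi
  have h1 : HasFDerivAt
      (fun y : Fin 2 → ℝ => -y 1 - (y 1) ^ 2 / 2 + φ (y 1 - y 0))
      (-P1 - x 1 • P1 + (deriv φ (x 1 - x 0)) • (P1 - P0)) x :=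
    (hP1.neg.sub hsq1).add hphi
  have e0 := h0.fderiv
  have e1 := h1.fderiv
  funext i
  fin_cases i <;>
    simp [jacR, mulVec, dotProduct, Fin.sum_univ_two, e0, e1, hP0def, hP1def,
      Pi.single_apply] <;> ring
end
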